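/- Let G = (V, E) be a 3-uniform hypergraph on n vertices and let m ≥ 1 with n ≥ 2^{m²}. Then there exist distinct vertices v_1, ..., v_m, v_{m+1} such that for every pair 1 ≤ i < j ≤ m, either all triples {v_i, v_j, v_k} with j < k ≤ m+1 are hyperedges of G, or none of them is. -/

import Mathlib

private lemma snoc_mk_lt {α : Type*} {t : ℕ} (v : Fin t → α) (x : α) {c : ℕ} (h : c < t)
    (h' : c < t + 1) : (Fin.snoc v x : Fin (t+1) → α) ⟨c, h'⟩ = v ⟨c, h⟩ := by
  rw [show (⟨c, h'⟩ : Fin (t+1)) = Fin.castSucc ⟨c, h⟩ from Fin.ext rfl, Fin.snoc_castSucc]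

private lemma snoc_mk_last {α : Type*} {t : ℕ} (v : Fin t → α) (x : α)
    (h' : t < t + 1) : (Fin.snoc v x : Fin (t+1) → α) ⟨t, h'⟩ = x := by
  rw [show (⟨t, h'⟩ : Fin (t+1)) = Fin.last t from Fin.ext rfl, Fin.snoc_last]

private lemma key (n m : ℕ) (E : Finset (Fin n) → Prop) (hn : 2 ^ (m * m) ≤ n) :
    ∀ t, t ≤ m →
    ∃ (v : Fin t → Fin n) (S : Finset (Fin n)),
      Function.Injective v ∧ (∀ i, v i ∉ S) ∧ 2 ^ (m * (m - t)) ≤ S.card ∧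
      ∀ i j : Fin t, i < j →
        (∀ w, (w ∈ S ∨ ∃ k : Fin t, j < k ∧ w = v k) → E {v i, v j, w}) ∨
        (∀ w, (w ∈ S ∨ ∃ k : Fin t, j < k ∧ w = v k) → ¬ E {v i, v j, w}) := by
  intro t
  induction t with
  | zero =>
    intro _
    refine ⟨Fin.elim0, Finset.univ, fun a => a.elim0, fun i => i.elim0, ?_, fun i => i.elim0⟩
    simpa using hn
  | succ t ih =>
    intro hst
    obtain ⟨v, S, hinj, hout, hcard, hom⟩ := ih (Nat.le_of_succ_le hst)
    classical
    have hSpos : 0 < S.card := lt_of_lt_of_le (Nat.pow_pos (by norm_num)) hcard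
    obtain ⟨x, hx⟩ := Finset.card_pos.mp hSpos
    set c : Fin n → (Fin t → Bool) := fun w i => decide (E {v i, x, w}) with hc
    -- pigeonhole
    have htm : t < m := hst
    have hexp : t + m * (m - (t + 1)) < m * (m - t) := by
      have h1 : m - t = (m - (t + 1)) + 1 := by omega
      rw [h1, Nat.mul_add, Nat.mul_one]
      omega
    have hmul : (Finset.univ : Finset (Fin t → Bool)).card * 2 ^ (m * (m - (t + 1)))
        ≤ (S.erase x).card := by
      rw [Finset.card_univ, Finset.card_erase_of_mem hx]
      have hcu : Fintype.card (Fin t → Bool) = 2 ^ t := by simp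
      rw [hcu, ← pow_add]
      have : 2 ^ (t + m * (m - (t + 1))) < 2 ^ (m * (m - t)) :=
        Nat.pow_lt_pow_right (by norm_num) hexp
      omega
    obtain ⟨b, -, hb⟩ := Finset.exists_le_card_fiber_of_mul_le_card_of_maps_to
      (f := c) (fun w _ => Finset.mem_univ (c w)) Finset.univ_nonempty hmul
    set S' : Finset (Fin n) := (S.erase x).filter (fun w => c w = b) with hS'
    have hsub : S' ⊆ S := fun w hw =>
      Finset.mem_of_mem_erase (Finset.mem_of_mem_filter _ hw)
    have hS'c : ∀ w ∈ S', c w = b := fun w hw => (Finset.mem_filter.mp hw).2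
    set v' : Fin (t + 1) → Fin n := Fin.snoc v x with hv'
    refine ⟨v', S', ?_, ?_, hb, ?_⟩
    · -- injective
      rintro ⟨av, ha⟩ ⟨bv, hbv⟩ hab
      rcases Nat.lt_succ_iff_lt_or_eq.mp ha with ha' | ha' <;>
        rcases Nat.lt_succ_iff_lt_or_eq.mp hbv with hb' | hb'
      · rw [hv', snoc_mk_lt v x ha', snoc_mk_lt v x hb'] at hab
        have : av = bv := congrArg Fin.val (hinj hab)
        exact Fin.ext this
      · subst hb'
        rw [hv', snoc_mk_lt v x ha', snoc_mk_last] at hab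
        exact absurd (hab ▸ hx) (hout _)
      · subst ha'
        rw [hv', snoc_mk_lt v x hb', snoc_mk_last] at hab
        exact absurd (hab.symm ▸ hx) (hout _)
      · exact Fin.ext (by simp [ha', hb'])
    · -- not in S'
      rintro ⟨iv, hi⟩ hmem
      rcases Nat.lt_succ_iff_lt_or_eq.mp hi with hi' | hi'
      · rw [hv', snoc_mk_lt v x hi'] at hmem
        exact hout _ (hsub hmem)
      · subst hi'
        rw [hv', snoc_mk_last] at hmem
        exact (Finset.notMem_erase x S) (Finset.mem_of_mem_filter _ hmem)
    · -- homogeneity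
      rintro ⟨iv, hi⟩ ⟨jv, hj⟩ hij
      have hij' : iv < jv := hij
      have hiv : iv < t := by omega
      have hviv : v' ⟨iv, hi⟩ = v ⟨iv, hiv⟩ := snoc_mk_lt v x hiv hi
      rcases Nat.lt_succ_iff_lt_or_eq.mp hj with hj' | hj'
      · -- old pair
        have hvjv : v' ⟨jv, hj⟩ = v ⟨jv, hj'⟩ := snoc_mk_lt v x hj' hj
        have hmap : ∀ w, (w ∈ S' ∨ ∃ k : Fin (t+1), ⟨jv, hj⟩ < k ∧ w = v' k) →
            (w ∈ S ∨ ∃ k : Fin t, ⟨jv, hj'⟩ < k ∧ w = v k) := by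
          rintro w (hw | ⟨⟨kv, hk⟩, hjk, rfl⟩)
          · exact Or.inl (hsub hw)
          · have hjk' : jv < kv := hjk
            rcases Nat.lt_succ_iff_lt_or_eq.mp hk with hk' | hk'
            · exact Or.inr ⟨⟨kv, hk'⟩, hjk', (snoc_mk_lt v x hk' hk).symm ▸ rfl⟩
            · subst hk'
              rw [hv', snoc_mk_last]
              exact Or.inl hx
        rcases hom ⟨iv, hiv⟩ ⟨jv, hj'⟩ hij' with h | h
        · exact Or.inl (fun w hw => by rw [hviv, hvjv]; exact h w (hmap w hw))
        · exact Or.inr (fun w hw => by rw [hviv, hvjv]; exact h w (hmap w hw))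
      · -- new pair: j = last
        have hvjv : v' ⟨jv, hj⟩ = x := by
          rw [show (⟨jv, hj⟩ : Fin (t+1)) = ⟨t, Nat.lt_succ_self t⟩ from Fin.ext hj', hv']
          exact snoc_mk_last v x _
        have hmem : ∀ w, (w ∈ S' ∨ ∃ k : Fin (t+1), ⟨jv, hj⟩ < k ∧ w = v' k) → w ∈ S' := by
          rintro w (hw | ⟨⟨kv, hk⟩, hjk, rfl⟩)
          · exact hw
          · have : jv < kv := hjk
            omega
        have hval : ∀ w ∈ S', decide (E {v ⟨iv, hiv⟩, x, w}) = b ⟨iv, hiv⟩ := by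
          intro w hw
          have := hS'c w hw
          calc decide (E {v ⟨iv, hiv⟩, x, w}) = c w ⟨iv, hiv⟩ := rfl
            _ = b ⟨iv, hiv⟩ := by rw [this]
        cases hbi : b ⟨iv, hiv⟩ with
        | true =>
          refine Or.inl (fun w hw => ?_)
          rw [hviv, hvjv]
          exact of_decide_eq_true ((hval w (hmem w hw)).trans hbi)
        | false =>
          refine Or.inr (fun w hw => ?_)
          rw [hviv, hvjv]
          exact of_decide_eq_false ((hval w (hmem w hw)).trans hbi)

theorem stmt_9 (n m : ℕ) (hm : 1 ≤ m) (hn : 2 ^ (m ^ 2) ≤ n)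
    (E : Finset (Fin n) → Prop) :
    ∃ v : Fin (m + 1) → Fin n, Function.Injective v ∧
      ∀ i j : Fin (m + 1), i < j → (j : ℕ) < m →
        ((∀ k, j < k → E {v i, v j, v k}) ∨ (∀ k, j < k → ¬ E {v i, v j, v k})) := by
  have hn' : 2 ^ (m * m) ≤ n := by rwa [← pow_two]
  obtain ⟨v, S, hinj, hout, hcard, hom⟩ := key n m E hn' m le_rfl
  have hSpos : 0 < S.card := by
    have : (1 : ℕ) ≤ S.card := by simpa using hcard
    omega
  obtain ⟨x, hx⟩ := Finset.card_pos.mp hSpos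
  refine ⟨Fin.snoc v x, ?_, ?_⟩
  · rintro ⟨av, ha⟩ ⟨bv, hbv⟩ hab
    rcases Nat.lt_succ_iff_lt_or_eq.mp ha with ha' | ha' <;>
      rcases Nat.lt_succ_iff_lt_or_eq.mp hbv with hb' | hb'
    · rw [snoc_mk_lt v x ha', snoc_mk_lt v x hb'] at hab
      have : av = bv := congrArg Fin.val (hinj hab)
      exact Fin.ext this
    · subst hb'
      rw [snoc_mk_lt v x ha', snoc_mk_last] at hab
      exact absurd (hab ▸ hx) (hout _)
    · subst ha'
      rw [snoc_mk_lt v x hb', snoc_mk_last] at hab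
      exact absurd (hab.symm ▸ hx) (hout _)
    · exact Fin.ext (by simp [ha', hb'])
  · rintro ⟨iv, hi⟩ ⟨jv, hj⟩ hij hjm
    have hij' : iv < jv := hij
    have hjm' : jv < m := hjm
    have hiv : iv < m := by omega
    have hvi : (Fin.snoc v x : Fin (m+1) → Fin n) ⟨iv, hi⟩ = v ⟨iv, hiv⟩ := snoc_mk_lt v x hiv hi
    have hvj : (Fin.snoc v x : Fin (m+1) → Fin n) ⟨jv, hj⟩ = v ⟨jv, hjm'⟩ := snoc_mk_lt v x hjm' hj
    have hmap : ∀ (k : Fin (m+1)), (⟨jv, hj⟩ : Fin (m+1)) < k →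
        ((Fin.snoc v x : Fin (m+1) → Fin n) k ∈ S ∨ ∃ k' : Fin m, ⟨jv, hjm'⟩ < k' ∧ (Fin.snoc v x : Fin (m+1) → Fin n) k = v k') := by
      rintro ⟨kv, hk⟩ hjk
      have hjk' : jv < kv := hjk
      rcases Nat.lt_succ_iff_lt_or_eq.mp hk with hk' | hk'
      · exact Or.inr ⟨⟨kv, hk'⟩, hjk', snoc_mk_lt v x hk' hk⟩
      · subst hk'
        rw [snoc_mk_last]
        exact Or.inl hx
    rcases hom ⟨iv, hiv⟩ ⟨jv, hjm'⟩ hij' with h | h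
    · refine Or.inl (fun k hk => ?_)
      rw [hvi, hvj]
      exact h _ (hmap k hk)
    · refine Or.inr (fun k hk => ?_)
      rw [hvi, hvj]
      exact h _ (hmap k hk)
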